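/- Let θ be a CPWL function, let x̄, v̄, Ψ, Λ(x̄) be as in the variational-system setting with v̄ ∈ Λ(x̄), and assume in addition that f is continuously differentiable around x̄ and Φ is twice continuously differentiable around x̄. If v̄ is a noncritical multiplier, then there exists a neighborhood V of (x̄,v̄) such that S(0,0) ∩ V = ({x̄} × Λ(x̄)) ∩ V. -/

import Mathlib

open Filter Topology Set RealInnerProductSpace

noncomputable section

abbrev Ev (k : ℕ) := EuclideanSpace ℝ (Fin k)

/-- The Bouligand–Severi tangent cone to a set `s` at `x`. -/
def tcone {E : Type*} [NormedAddCommGroup E] [NormedSpace ℝ E] (s : Set E) (x : E) : Set E :=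
  {w | ∃ (z : ℕ → E) (c : ℕ → ℝ), (∀ k, z k ∈ s) ∧ (∀ k, 0 ≤ c k) ∧
      Tendsto z atTop (𝓝 x) ∧ Tendsto (fun k => c k • (z k - x)) atTop (𝓝 w)}

/-- The data of a convex piecewise linear (CPWL) extended-real-valued function on `ℝ^m`:
`θ(z) = max_i (⟨a i, z⟩ - al i)` on the polyhedron `dom θ = {z | ⟨d i, z⟩ ≤ be i ∀ i}`,
and `θ(z) = +∞` outside of it. -/
structure CPWL (m : ℕ) where
  l : ℕ
  p : ℕ
  hl : 0 < l
  a : Fin l → Ev m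
  al : Fin l → ℝ
  d : Fin p → Ev m
  be : Fin p → ℝ
  dom_nonempty : ∃ z : Ev m, ∀ i, ⟪d i, z⟫ ≤ be i

namespace CPWL

variable {m : ℕ} (θ : CPWL m)

/-- The (polyhedral) domain of the CPWL function. -/
def dom : Set (Ev m) := {z | ∀ i, ⟪θ.d i, z⟫ ≤ θ.be i}

/-- The real value `max_i (⟨a i, z⟩ - al i)` of the CPWL function (meaningful on its domain). -/
def val (z : Ev m) : ℝ := ⨆ i : Fin θ.l, (⟪θ.a i, z⟫ - θ.al i)

/-- The CPWL function as an extended-real-valued function. -/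
def eval (z : Ev m) : EReal :=
  @ite _ (z ∈ θ.dom) (Classical.propDecidable _) ((θ.val z : ℝ) : EReal) ⊤

/-- The subdifferential (of convex analysis) of the CPWL function. -/
def subdiff (z : Ev m) : Set (Ev m) :=
  {v | z ∈ θ.dom ∧ ∀ z' ∈ θ.dom, ⟪v, z' - z⟫ ≤ θ.val z' - θ.val z}

/-- Active indices `K(z)` of the max-representation. -/
def Kact (z : Ev m) : Set (Fin θ.l) := {i | θ.val z = ⟪θ.a i, z⟫ - θ.al i}

/-- Active indices `I(z)` of the domain constraints. -/
def Iact (z : Ev m) : Set (Fin θ.p) := {i | ⟪θ.d i, z⟫ = θ.be i}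

/-- The critical cone `𝒦(z̄,v̄) = {w ∈ T(z̄; dom θ) : ⟨v̄,w⟩ = θ′(z̄;w)}`. -/
def crit (zb vb : Ev m) : Set (Ev m) :=
  {w | w ∈ tcone θ.dom zb ∧
    Tendsto (fun t : ℝ => (θ.val (zb + t • w) - θ.val zb) / t) (𝓝[>] (0 : ℝ))
      (𝓝 ⟪vb, w⟫)}

/-- The graph of the subdifferential mapping. -/
def gph : Set (Ev m × Ev m) := {zv | zv.2 ∈ θ.subdiff zv.1}

/-- The graphical derivative `(D∂θ)(z̄,v̄)(u)`. -/
def Dsub (zb vb u : Ev m) : Set (Ev m) := {w | (u, w) ∈ tcone θ.gph (zb, vb)}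

/-- The regular coderivative `(D̂*∂θ)(z̄,v̄)(u)`. -/
def Dhat (zb vb u : Ev m) : Set (Ev m) :=
  {w | ∀ h ∈ tcone θ.gph (zb, vb), ⟪w, h.1⟫ - ⟪u, h.2⟫ ≤ 0}

end CPWL

section VarSys

variable {n m : ℕ}

/-- The adjoint `∇Φ(x)*` of the Jacobian of `Φ` at `x`. -/
def adjD (Φ : Ev n → Ev m) (x : Ev n) : Ev m →L[ℝ] Ev n :=
  ContinuousLinearMap.adjoint (fderiv ℝ Φ x)

/-- `Ψ(x,v) = f(x) + ∇Φ(x)* v`. -/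
def Psi (f : Ev n → Ev n) (Φ : Ev n → Ev m) (x : Ev n) (v : Ev m) : Ev n :=
  f x + adjD Φ x v

/-- The partial Jacobian `∇ₓΨ(x̄,v̄)`. -/
def gradxPsi (f : Ev n → Ev n) (Φ : Ev n → Ev m) (xb : Ev n) (vb : Ev m) :
    Ev n →L[ℝ] Ev n :=
  fderiv ℝ (fun x => Psi f Φ x vb) xb

/-- The Lagrange multiplier set `Λ(x̄)` of the variational system. -/
def Lam (f : Ev n → Ev n) (Φ : Ev n → Ev m) (θ : CPWL m) (xb : Ev n) : Set (Ev m) :=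
  {v | Psi f Φ xb v = 0 ∧ v ∈ θ.subdiff (Φ xb)}

/-- `v̄` is a critical multiplier for the variational system. -/
def IsCritical (f : Ev n → Ev n) (Φ : Ev n → Ev m) (θ : CPWL m) (xb : Ev n) (vb : Ev m) :
    Prop :=
  ∃ ξ : Ev n, ξ ≠ 0 ∧ ∃ w ∈ θ.Dsub (Φ xb) vb (fderiv ℝ Φ xb ξ),
    gradxPsi f Φ xb vb ξ + adjD Φ xb w = 0

/-- The solution map of the canonically perturbed variational system. -/
def Smap (f : Ev n → Ev n) (Φ : Ev n → Ev m) (θ : CPWL m) (p₁ : Ev n) (p₂ : Ev m) :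
    Set (Ev n × Ev m) :=
  {xv | Psi f Φ xv.1 xv.2 = p₁ ∧ xv.2 ∈ θ.subdiff (Φ xv.1 + p₂)}

end VarSys

section General

variable {n m : ℕ}

/-- The subdifferential of a general extended-real-valued function. -/
def subdiffE (θ : Ev m → EReal) (z : Ev m) : Set (Ev m) :=
  {v | ∀ z', ((⟪v, z' - z⟫ : ℝ) : EReal) ≤ θ z' - θ z}

/-- The graph of the subdifferential of a general extended-real-valued function. -/
def gphE (θ : Ev m → EReal) : Set (Ev m × Ev m) := {zv | zv.2 ∈ subdiffE θ zv.1}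

/-- The graphical derivative of the subdifferential, general case. -/
def DsubE (θ : Ev m → EReal) (zb vb u : Ev m) : Set (Ev m) :=
  {w | (u, w) ∈ tcone (gphE θ) (zb, vb)}

/-- The Lagrange multiplier set, general case. -/
def LamE (f : Ev n → Ev n) (Φ : Ev n → Ev m) (θ : Ev m → EReal) (xb : Ev n) :
    Set (Ev m) :=
  {v | Psi f Φ xb v = 0 ∧ v ∈ subdiffE θ (Φ xb)}

/-- The solution map of the canonically perturbed variational system, general case. -/
def SmapE (f : Ev n → Ev n) (Φ : Ev n → Ev m) (θ : Ev m → EReal) (p₁ : Ev n)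
    (p₂ : Ev m) : Set (Ev n × Ev m) :=
  {xv | Psi f Φ xv.1 xv.2 = p₁ ∧ xv.2 ∈ subdiffE θ (Φ xv.1 + p₂)}

end General

section Composite

variable {n m : ℕ}

/-- The gradient `∇ₓL(·,v)` of the Lagrangian `L(x,v) = φ₀(x) + ⟨Φ(x),v⟩`. -/
def gradL (φ₀ : Ev n → ℝ) (Φ : Ev n → Ev m) (v : Ev m) (x : Ev n) : Ev n :=
  gradient (fun y => φ₀ y + ⟪Φ y, v⟫) x

/-- The Hessian `∇²ₓₓL(x̄,v)` as a linear operator. -/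
def HessOp (φ₀ : Ev n → ℝ) (Φ : Ev n → Ev m) (v : Ev m) (xb : Ev n) : Ev n →L[ℝ] Ev n :=
  fderiv ℝ (gradL φ₀ Φ v) xb

/-- The Lagrange multiplier set `Λ_com(x̄)` of the composite optimization problem. -/
def LamCom (φ₀ : Ev n → ℝ) (Φ : Ev n → Ev m) (θ : CPWL m) (xb : Ev n) : Set (Ev m) :=
  {v | gradient φ₀ xb + adjD Φ xb v = 0 ∧ v ∈ θ.subdiff (Φ xb)}

/-- Criticality of a multiplier in the composite optimization setting. -/
def IsCriticalCom (φ₀ : Ev n → ℝ) (Φ : Ev n → Ev m) (θ : CPWL m) (xb : Ev n) (v : Ev m) :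
    Prop :=
  ∃ ξ : Ev n, ξ ≠ 0 ∧ ∃ w ∈ θ.Dsub (Φ xb) v (fderiv ℝ Φ xb ξ),
    HessOp φ₀ Φ v xb ξ + adjD Φ xb w = 0

/-- The solution map of the canonically perturbed KKT system of composite optimization. -/
def SKKT (φ₀ : Ev n → ℝ) (Φ : Ev n → Ev m) (θ : CPWL m) (p₁ : Ev n) (p₂ : Ev m) :
    Set (Ev n × Ev m) :=
  {xv | gradient φ₀ xv.1 + adjD Φ xv.1 xv.2 = p₁ ∧ xv.2 ∈ θ.subdiff (Φ xv.1 + p₂)}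

/-- `x̄` is a local minimizer of `φ₀ + θ∘Φ`. -/
def LocalMin (φ₀ : Ev n → ℝ) (Φ : Ev n → Ev m) (θ : CPWL m) (xb : Ev n) : Prop :=
  ∃ U ∈ 𝓝 xb, ∀ x ∈ U,
    ((φ₀ xb : ℝ) : EReal) + θ.eval (Φ xb) ≤ ((φ₀ x : ℝ) : EReal) + θ.eval (Φ x)

end Composite

section Calmness

variable {n m : ℕ}

/-- Isolated calmness of a solution map at `((0,0), q0)`. -/
def IsolCalm (S : Ev n × Ev m → Set (Ev n × Ev m)) (q0 : Ev n × Ev m) : Prop :=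
  ∃ c : ℝ, 0 ≤ c ∧ ∃ U ∈ 𝓝 (0 : Ev n × Ev m), ∃ V ∈ 𝓝 q0,
    ∀ p ∈ U, ∀ q ∈ S p ∩ V, ‖q - q0‖ ≤ c * (‖p.1‖ + ‖p.2‖)

/-- Robust isolated calmness of a solution map at `((0,0), q0)`. -/
def RobustIsolCalm (S : Ev n × Ev m → Set (Ev n × Ev m)) (q0 : Ev n × Ev m) : Prop :=
  ∃ c : ℝ, 0 ≤ c ∧ ∃ U ∈ 𝓝 (0 : Ev n × Ev m), ∃ V ∈ 𝓝 q0,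
    (∀ p ∈ U, ∀ q ∈ S p ∩ V, ‖q - q0‖ ≤ c * (‖p.1‖ + ‖p.2‖)) ∧
    (∀ p ∈ U, (S p ∩ V).Nonempty)

/-- The Lipschitz-like (Aubin) property of a solution map around `((0,0), q0)`. -/
def LipschitzLike (S : Ev n × Ev m → Set (Ev n × Ev m)) (q0 : Ev n × Ev m) : Prop :=
  ∃ c : ℝ, 0 ≤ c ∧ ∃ U ∈ 𝓝 (0 : Ev n × Ev m), ∃ V ∈ 𝓝 q0,
    ∀ p ∈ U, ∀ p' ∈ U, ∀ q ∈ S p ∩ V, ∃ q' ∈ S p', ‖q - q'‖ ≤ c * ‖p - p'‖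

end Calmness

section TC
variable {E : Type*} [NormedAddCommGroup E] [NormedSpace ℝ E]

lemma isClosed_tcone (s : Set E) (x : E) : IsClosed (tcone s x) := by
  refine IsSeqClosed.isClosed ?_
  intro u p hu hup
  have key : ∀ n : ℕ, ∃ zc : E × ℝ, zc.1 ∈ s ∧ 0 ≤ zc.2 ∧ ‖zc.1 - x‖ < 1/(n+1) ∧
      ‖zc.2 • (zc.1 - x) - u n‖ < 1/(n+1) := by
    intro n
    obtain ⟨z, c, hzs, hc, hzx, hcz⟩ := hu n
    have h1 : ∀ᶠ k in atTop, ‖z k - x‖ < 1/(n+1) := by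
      have : Tendsto (fun k => ‖z k - x‖) atTop (𝓝 0) := by
        simpa using (tendsto_sub_nhds_zero_iff.2 hzx).norm
      exact this.eventually_lt_const (show (0:ℝ) < 1/(n+1) by positivity)
    have h2 : ∀ᶠ k in atTop, ‖c k • (z k - x) - u n‖ < 1/(n+1) := by
      have : Tendsto (fun k => ‖c k • (z k - x) - u n‖) atTop (𝓝 0) := by
        simpa using (tendsto_sub_nhds_zero_iff.2 hcz).norm
      exact this.eventually_lt_const (show (0:ℝ) < 1/(n+1) by positivity)
    obtain ⟨k, hk1, hk2⟩ := (h1.and h2).exists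
    exact ⟨(z k, c k), hzs k, hc k, hk1, hk2⟩
  choose zc h1 h2 h3 h4 using key
  refine ⟨fun n => (zc n).1, fun n => (zc n).2, h1, h2, ?_, ?_⟩
  · rw [← tendsto_sub_nhds_zero_iff]
    apply squeeze_zero_norm (fun n => le_of_lt (h3 n))
    exact tendsto_one_div_add_atTop_nhds_zero_nat
  · rw [← tendsto_sub_nhds_zero_iff]
    refine squeeze_zero_norm (a := fun n => 1/(n+1) + ‖u n - p‖) (fun n => ?_) ?_
    · calc ‖(zc n).2 • ((zc n).1 - x) - p‖
          ≤ ‖(zc n).2 • ((zc n).1 - x) - u n‖ + ‖u n - p‖ := by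
            simpa using norm_add_le ((zc n).2 • ((zc n).1 - x) - u n) (u n - p)
        _ ≤ 1/(n+1) + ‖u n - p‖ := add_le_add (le_of_lt (h4 n)) le_rfl
    · simpa using tendsto_one_div_add_atTop_nhds_zero_nat.add
        (tendsto_sub_nhds_zero_iff.2 hup).norm

lemma mem_tcone_of_segment {s : Set E} {x w : E} {τ : ℝ} (hτ : 0 < τ)
    (h : ∀ k : ℕ, x + (τ / (k+1)) • w ∈ s) : w ∈ tcone s x := by
  refine ⟨fun k => x + (τ / (k+1)) • w, fun k => ((k:ℝ)+1)/τ, h,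
    fun k => by positivity, ?_, ?_⟩
  · have : Tendsto (fun k : ℕ => (τ / (k+1)) • w) atTop (𝓝 ((0:ℝ) • w)) := by
      apply Tendsto.smul_const
      simpa [div_eq_mul_inv, one_div] using
        (tendsto_one_div_add_atTop_nhds_zero_nat.const_mul τ)
    simpa using tendsto_const_nhds.add this
  · have : ∀ k : ℕ, (((k:ℝ)+1)/τ) • ((x + (τ / (k+1)) • w) - x) = w := by
      intro k
      have hk : ((k:ℝ)+1) ≠ 0 := by positivity
      rw [add_sub_cancel_left, smul_smul]
      rw [div_mul_div_comm, mul_comm]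
      rw [div_self (by positivity), one_smul]
    simpa only [this] using (tendsto_const_nhds : Tendsto (fun _ : ℕ => w) atTop (𝓝 w))
end TC
section ConeGen
variable {E : Type*} [NormedAddCommGroup E] [NormedSpace ℝ E]
variable {ι : Type*} [Fintype ι] [DecidableEq ι]

def coneGen (g : ι → E) : Set E :=
  {x | ∃ μ : ι → ℝ, (∀ i, 0 ≤ μ i) ∧ x = ∑ i, μ i • g i}

lemma caratheodory_cone (g : ι → E) (s : Finset ι) :
    ∀ μ : ι → ℝ, (∀ i, 0 ≤ μ i) →
    ∃ t ⊆ s, LinearIndependent ℝ (fun i : t => g i) ∧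
      ∃ ν : ι → ℝ, (∀ i, 0 ≤ ν i) ∧ (∀ i ∉ t, ν i = 0) ∧
        ∑ i ∈ t, ν i • g i = ∑ i ∈ s, μ i • g i := by
  induction s using Finset.strongInduction with
  | _ s ih =>
    intro μ hμ
    by_cases hLI : LinearIndependent ℝ (fun i : s => g i)
    · refine ⟨s, Finset.Subset.refl s, hLI, fun i => if i ∈ s then μ i else 0,
        fun i => by dsimp only; split <;> simp [hμ], fun i hi => by simp [hi], ?_⟩
      exact Finset.sum_congr rfl (fun i hi => by simp [hi])
    · obtain ⟨c, hc0, i₁, hi₁⟩ := Fintype.not_linearIndependent_iff.1 hLI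
      -- extend c to ι
      set C : ι → ℝ := fun i => if h : i ∈ s then c ⟨i, h⟩ else 0 with hC
      have hCsum : ∑ i ∈ s, C i • g i = 0 := by
        rw [← hc0, ← Finset.sum_attach s (fun i => C i • g i)]
        exact Finset.sum_congr rfl (fun i _ => by simp [hC, i.2])
      have hCex : ∃ i ∈ s, C i ≠ 0 := ⟨i₁, i₁.2, by simp [hC, i₁.2, hi₁]⟩
      -- wlog: some positive coefficient
      have key : ∀ C : ι → ℝ, (∑ i ∈ s, C i • g i = 0) → (∃ i ∈ s, 0 < C i) →
          ∃ t ⊆ s, LinearIndependent ℝ (fun i : t => g i) ∧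
          ∃ ν : ι → ℝ, (∀ i, 0 ≤ ν i) ∧ (∀ i ∉ t, ν i = 0) ∧
            ∑ i ∈ t, ν i • g i = ∑ i ∈ s, μ i • g i := by
        intro C hCsum hCpos
        classical
        set P := s.filter (fun i => 0 < C i) with hP
        have hPne : P.Nonempty := by
          obtain ⟨i, hi, hpos⟩ := hCpos
          exact ⟨i, Finset.mem_filter.2 ⟨hi, hpos⟩⟩
        set r := P.inf' hPne (fun i => μ i / C i) with hr
        obtain ⟨i₀, hi₀P, hi₀⟩ := Finset.exists_mem_eq_inf' hPne (fun i => μ i / C i)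
        have hi₀s : i₀ ∈ s := (Finset.mem_filter.1 hi₀P).1
        have hi₀pos : 0 < C i₀ := (Finset.mem_filter.1 hi₀P).2
        have hr0 : 0 ≤ r := by
          rw [hr]
          apply Finset.le_inf'
          intro i hi
          have := (Finset.mem_filter.1 hi).2
          exact div_nonneg (hμ i) this.le
        set ν : ι → ℝ := fun i => if i ∈ s then μ i - r * C i else 0 with hν
        have hν0 : ∀ i, 0 ≤ ν i := by
          intro i
          rw [hν]; dsimp only
          split
          · rename_i hi
            rcases le_or_gt (C i) 0 with h | h
            · nlinarith [hμ i]
            · have hrle : r ≤ μ i / C i := Finset.inf'_le _ (Finset.mem_filter.2 ⟨hi, h⟩)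
              rw [sub_nonneg]
              calc r * C i ≤ (μ i / C i) * C i := by nlinarith
                _ = μ i := by field_simp
          · exact le_rfl
        have hνi₀ : ν i₀ = 0 := by
          rw [hν]; dsimp only
          rw [if_pos hi₀s, hr, hi₀, div_mul_cancel₀ _ hi₀pos.ne', sub_self]
        have hsum : ∑ i ∈ s.erase i₀, ν i • g i = ∑ i ∈ s, μ i • g i := by
          rw [Finset.sum_erase _ (by rw [hνi₀, zero_smul])]
          have : ∑ i ∈ s, ν i • g i = ∑ i ∈ s, μ i • g i - r • ∑ i ∈ s, C i • g i := by
            rw [Finset.smul_sum, ← Finset.sum_sub_distrib]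
            refine Finset.sum_congr rfl (fun i hi => ?_)
            rw [hν]; dsimp only
            rw [if_pos hi, sub_smul, smul_smul]
          rw [this, hCsum, smul_zero, sub_zero]
        obtain ⟨t, hts, hLI', ν', hν'0, hν's, hsum'⟩ := ih (s.erase i₀) (Finset.erase_ssubset hi₀s) ν hν0
        exact ⟨t, hts.trans (Finset.erase_subset _ _), hLI', ν', hν'0, hν's, by rw [hsum', hsum]⟩
      rcases hCex with ⟨iw, hiw, hiwne⟩
      rcases lt_or_gt_of_ne hiwne with hneg | hpos
      · refine key (fun i => - C i) ?_ ⟨iw, hiw, show (0:ℝ) < - C iw by linarith⟩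
        simp only [neg_smul, Finset.sum_neg_distrib]
        rw [hCsum, neg_zero]
      · exact key C hCsum ⟨iw, hiw, hpos⟩

lemma zero_mem_coneGen (g : ι → E) : (0:E) ∈ coneGen g :=
  ⟨fun _ => 0, fun _ => le_rfl, by simp⟩

lemma isClosed_coneGen (g : ι → E) : IsClosed (coneGen g) := by
  classical
  -- F t : points representable with support in t
  set F : Finset ι → Set E := fun t =>
    {x | ∃ ν : ι → ℝ, (∀ i, 0 ≤ ν i) ∧ (∀ i ∉ t, ν i = 0) ∧ x = ∑ i ∈ t, ν i • g i} with hF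
  have hFclosed : ∀ t : Finset ι, LinearIndependent ℝ (fun i : t => g i) → IsClosed (F t) := by
    intro t hLI
    set L : (t → ℝ) →ₗ[ℝ] E := Fintype.linearCombination ℝ (fun i : t => g i) with hL
    have hLapp : ∀ ν : t → ℝ, L ν = ∑ i : t, ν i • g (i:ι) := by
      intro ν; simp [hL, Fintype.linearCombination_apply]
    have hinj : LinearMap.ker L = ⊥ := by
      rw [LinearMap.ker_eq_bot']
      intro ν hν
      have := Fintype.linearIndependent_iff.1 hLI ν (by rw [← hLapp]; exact hν)
      funext i; exact this i
    have hemb : IsClosedEmbedding L := LinearMap.isClosedEmbedding_of_injective hinj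
    have hset : IsClosed {ν : t → ℝ | ∀ i, 0 ≤ ν i} := by
      have : {ν : t → ℝ | ∀ i, 0 ≤ ν i} = ⋂ i, {ν : t → ℝ | 0 ≤ ν i} := by
        ext ν; simp
      rw [this]
      exact isClosed_iInter (fun i => isClosed_le continuous_const (continuous_apply i))
    have himage : F t = L '' {ν : t → ℝ | ∀ i, 0 ≤ ν i} := by
      ext x
      constructor
      · rintro ⟨ν, hν0, hνt, rfl⟩
        refine ⟨fun i => ν i, fun i => hν0 i, ?_⟩
        rw [hLapp]
        exact Finset.sum_coe_sort t (fun i => ν i • g i)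
      · rintro ⟨ν, hν0, rfl⟩
        refine ⟨fun i => if h : i ∈ t then ν ⟨i, h⟩ else 0,
          fun i => by dsimp only; split; exacts [hν0 _, le_rfl],
          fun i hi => by simp [hi], ?_⟩
        rw [hLapp]
        rw [← Finset.sum_coe_sort t (fun i => (if h : i ∈ t then ν ⟨i, h⟩ else 0) • g i)]
        exact (Finset.sum_congr rfl (fun i _ => by simp [i.2])).symm
    rw [himage]
    exact hemb.isClosedMap _ hset
  -- coneGen = union of the (closed) pieces
  have hunion : coneGen g = ⋃ t : Finset ι,
      (if LinearIndependent ℝ (fun i : t => g i) then F t else {0}) := by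
    ext x
    constructor
    · rintro ⟨μ, hμ0, rfl⟩
      obtain ⟨t, _, hLI, ν, hν0, hνt, hsum⟩ := caratheodory_cone g Finset.univ μ hμ0
      refine Set.mem_iUnion.2 ⟨t, ?_⟩
      rw [if_pos hLI]
      exact ⟨ν, hν0, hνt, hsum.symm⟩
    · intro hx
      obtain ⟨t, hxt⟩ := Set.mem_iUnion.1 hx
      by_cases hLI : LinearIndependent ℝ (fun i : t => g i)
      · rw [if_pos hLI] at hxt
        obtain ⟨ν, hν0, hνt, rfl⟩ := hxt
        refine ⟨ν, hν0, ?_⟩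
        exact Finset.sum_subset (f := fun i => ν i • g i) (Finset.subset_univ t)
          (fun i _ hi => by simp only [hνt i hi, zero_smul])
      · rw [if_neg hLI] at hxt
        rw [Set.mem_singleton_iff.1 hxt]
        exact zero_mem_coneGen g
  rw [hunion]
  apply isClosed_iUnion_of_finite
  intro t
  split
  · next h => exact hFclosed t h
  · exact isClosed_singleton

lemma image_coneGen {F' : Type*} [NormedAddCommGroup F'] [NormedSpace ℝ F']
    (T : E →L[ℝ] F') (g : ι → E) {x : E} (hx : x ∈ coneGen g) :
    T x ∈ coneGen (fun i => T (g i)) := by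
  obtain ⟨μ, hμ0, rfl⟩ := hx
  exact ⟨μ, hμ0, by simp [map_sum, map_smul]⟩

lemma coneGen_elem_surj {F' : Type*} [NormedAddCommGroup F'] [NormedSpace ℝ F']
    (T : E →L[ℝ] F') (g : ι → E) {y : F'} (hy : y ∈ coneGen (fun i => T (g i))) :
    ∃ x ∈ coneGen g, T x = y := by
  obtain ⟨μ, hμ0, rfl⟩ := hy
  exact ⟨∑ i, μ i • g i, ⟨μ, hμ0, rfl⟩, by simp [map_sum, map_smul]⟩

end ConeGen
/-! ### Auxiliary development -/

section Aux

lemma exists_frequently_eq {α : Type*} [Finite α] (F : ℕ → α) :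
    ∃ c, ∃ᶠ k in atTop, F k = c := by
  by_contra h
  push_neg at h
  have h' : ∀ c : α, ∀ᶠ k in atTop, F k ≠ c := fun c => h c
  have : ∀ᶠ k in atTop, ∀ c : α, F k ≠ c := eventually_all.2 h'
  obtain ⟨k, hk⟩ := this.exists
  exact hk (F k) rfl

end Aux

namespace CPWL

variable {m : ℕ} (θ : CPWL m)

lemma nel : Nonempty (Fin θ.l) := ⟨⟨0, θ.hl⟩⟩

lemma bddA (z : Ev m) : BddAbove (Set.range fun i : Fin θ.l => ⟪θ.a i, z⟫ - θ.al i) :=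
  Set.Finite.bddAbove (Set.finite_range _)

lemma term_le_val (z : Ev m) (i : Fin θ.l) : ⟪θ.a i, z⟫ - θ.al i ≤ θ.val z :=
  le_ciSup (θ.bddA z) i

lemma val_eq_of_max {z : Ev m} {i : Fin θ.l}
    (h : ∀ i', ⟪θ.a i', z⟫ - θ.al i' ≤ ⟪θ.a i, z⟫ - θ.al i) :
    θ.val z = ⟪θ.a i, z⟫ - θ.al i := by
  haveI := θ.nel
  exact le_antisymm (ciSup_le h) (θ.term_le_val z i)

lemma exists_active (z : Ev m) : ∃ i, θ.val z = ⟪θ.a i, z⟫ - θ.al i := by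
  haveI := θ.nel
  obtain ⟨i, hi⟩ := Finite.exists_max (fun i : Fin θ.l => ⟪θ.a i, z⟫ - θ.al i)
  exact ⟨i, θ.val_eq_of_max hi⟩

open Classical in
/-- Active index set of the max representation, as a `Finset`. -/
def KactF (z : Ev m) : Finset (Fin θ.l) :=
  Finset.univ.filter (fun i => θ.val z = ⟪θ.a i, z⟫ - θ.al i)

open Classical in
/-- Active index set of the domain constraints, as a `Finset`. -/
def IactF (z : Ev m) : Finset (Fin θ.p) :=
  Finset.univ.filter (fun j => ⟪θ.d j, z⟫ = θ.be j)

lemma mem_KactF {z : Ev m} {i : Fin θ.l} :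
    i ∈ θ.KactF z ↔ θ.val z = ⟪θ.a i, z⟫ - θ.al i := by
  simp [KactF]

lemma mem_IactF {z : Ev m} {j : Fin θ.p} :
    j ∈ θ.IactF z ↔ ⟪θ.d j, z⟫ = θ.be j := by
  simp [IactF]

lemma KactF_nonempty (z : Ev m) : (θ.KactF z).Nonempty := by
  obtain ⟨i, hi⟩ := θ.exists_active z
  exact ⟨i, θ.mem_KactF.2 hi⟩

/-- The candidate convex piece of the graph:  `conv{aᵢ : i ∈ K} + cone{dⱼ : j ∈ I}`. -/
def convCone (K : Finset (Fin θ.l)) (I : Finset (Fin θ.p)) : Set (Ev m) :=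
  {v | ∃ lam : Fin θ.l → ℝ, ∃ mu : Fin θ.p → ℝ, (∀ i, 0 ≤ lam i) ∧ (∀ i ∉ K, lam i = 0) ∧
    ∑ i, lam i = 1 ∧ (∀ j, 0 ≤ mu j) ∧ (∀ j ∉ I, mu j = 0) ∧
    v = ∑ i, lam i • θ.a i + ∑ j, mu j • θ.d j}

/-- The corresponding polyhedral piece in the `z`-variable (as a predicate). -/
def Zp (K : Finset (Fin θ.l)) (I : Finset (Fin θ.p)) (z : Ev m) : Prop :=
  z ∈ θ.dom ∧ (∀ i ∈ K, ∀ i', ⟪θ.a i', z⟫ - θ.al i' ≤ ⟪θ.a i, z⟫ - θ.al i) ∧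
    (∀ j ∈ I, ⟪θ.d j, z⟫ = θ.be j)

lemma Zp_self (z : Ev m) (hz : z ∈ θ.dom) : θ.Zp (θ.KactF z) (θ.IactF z) z := by
  refine ⟨hz, fun i hi i' => ?_, fun j hj => θ.mem_IactF.1 hj⟩
  rw [← θ.mem_KactF.1 hi]
  exact θ.term_le_val z i'

lemma Zp_combo {K : Finset (Fin θ.l)} {I : Finset (Fin θ.p)} {z₁ z₂ : Ev m}
    (h₁ : θ.Zp K I z₁) (h₂ : θ.Zp K I z₂) {s : ℝ} (hs0 : 0 ≤ s) (hs1 : s ≤ 1) :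
    θ.Zp K I (z₁ + s • (z₂ - z₁)) := by
  have heq : ∀ y : Ev m, ⟪y, z₁ + s • (z₂ - z₁)⟫ = (1 - s) * ⟪y, z₁⟫ + s * ⟪y, z₂⟫ := by
    intro y
    rw [inner_add_right, real_inner_smul_right, inner_sub_right]
    ring
  refine ⟨fun j => ?_, fun i hi i' => ?_, fun j hj => ?_⟩
  · rw [heq]
    have := h₁.1 j
    have := h₂.1 j
    nlinarith
  · rw [heq, heq]
    have := h₁.2.1 i hi i'
    have := h₂.2.1 i hi i'
    nlinarith
  · rw [heq, h₁.2.2 j hj, h₂.2.2 j hj]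
    ring

lemma Zp_of_tendsto {K : Finset (Fin θ.l)} {I : Finset (Fin θ.p)} {z : ℕ → Ev m} {zb : Ev m}
    (hz : ∀ k, θ.Zp K I (z k)) (hzt : Tendsto z atTop (𝓝 zb)) : θ.Zp K I zb := by
  have hinner : ∀ y : Ev m, Tendsto (fun k => (⟪y, z k⟫ : ℝ)) atTop (𝓝 ⟪y, zb⟫) := by
    intro y
    exact ((continuous_const.inner continuous_id).tendsto zb).comp hzt
  refine ⟨fun j => ?_, fun i hi i' => ?_, fun j hj => ?_⟩
  · exact le_of_tendsto (hinner (θ.d j)) (Filter.Eventually.of_forall fun k => (hz k).1 j)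
  · refine le_of_tendsto_of_tendsto ((hinner (θ.a i')).sub_const _) ((hinner (θ.a i)).sub_const _)
      (Filter.Eventually.of_forall fun k => (hz k).2.1 i hi i')
  · have hconst : (fun k => (⟪θ.d j, z k⟫ : ℝ)) = fun _ => θ.be j :=
      funext fun k => (hz k).2.2 j hj
    exact tendsto_nhds_unique (hinner (θ.d j)) (by rw [hconst]; exact tendsto_const_nhds)

/-- Easy inclusion: the piece is contained in the subdifferential. -/
lemma convCone_subset_subdiff {K : Finset (Fin θ.l)} {I : Finset (Fin θ.p)} {z : Ev m}
    (hz : θ.Zp K I z) : θ.convCone K I ⊆ θ.subdiff z := by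
  rintro v ⟨lam, mu, hl0, hlK, hls, hm0, hmI, rfl⟩
  refine ⟨hz.1, fun z' hz' => ?_⟩
  have hsplit : ⟪∑ i, lam i • θ.a i + ∑ j, mu j • θ.d j, z' - z⟫
      = (∑ i, lam i * ⟪θ.a i, z' - z⟫) + ∑ j, mu j * ⟪θ.d j, z' - z⟫ := by
    rw [inner_add_left, sum_inner, sum_inner]
    congr 1 <;> exact Finset.sum_congr rfl fun i _ => real_inner_smul_left _ _ _
  rw [hsplit]
  have hb1 : (∑ i, lam i * ⟪θ.a i, z' - z⟫) ≤ ∑ i, lam i * (θ.val z' - θ.val z) := by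
    refine Finset.sum_le_sum fun i _ => ?_
    by_cases hi : i ∈ K
    · refine mul_le_mul_of_nonneg_left ?_ (hl0 i)
      have hzi : θ.val z = ⟪θ.a i, z⟫ - θ.al i := θ.val_eq_of_max (hz.2.1 i hi)
      have := θ.term_le_val z' i
      rw [inner_sub_right]
      linarith
    · rw [hlK i hi, zero_mul, zero_mul]
  have hb2 : (∑ j, mu j * ⟪θ.d j, z' - z⟫) ≤ 0 := by
    refine Finset.sum_nonpos fun j _ => ?_
    by_cases hj : j ∈ I
    · refine mul_nonpos_of_nonneg_of_nonpos (hm0 j) ?_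
      rw [inner_sub_right, hz.2.2 j hj]
      have := hz' j
      linarith
    · rw [hmI j hj, zero_mul]
  have hb1' : (∑ i, lam i * (θ.val z' - θ.val z)) = θ.val z' - θ.val z := by
    rw [← Finset.sum_mul, hls, one_mul]
  linarith [hb1, hb2, hb1'.le, hb1'.ge]

end CPWL
namespace CPWL

variable {m : ℕ} (θ : CPWL m)

lemma sum_comb {ι : Type*} [Fintype ι] (c c' : ℝ) (f f' : ι → ℝ) (x : ι → Ev m) :
    ∑ i, (c * f i + c' * f' i) • x i = c • ∑ i, f i • x i + c' • ∑ i, f' i • x i := by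
  rw [Finset.smul_sum, Finset.smul_sum, ← Finset.sum_add_distrib]
  refine Finset.sum_congr rfl fun i _ => ?_
  rw [add_smul, mul_smul, mul_smul]

lemma convex_convCone (K : Finset (Fin θ.l)) (I : Finset (Fin θ.p)) :
    Convex ℝ (θ.convCone K I) := by
  rintro v ⟨lam, mu, h1, h2, h3, h4, h5, rfl⟩ v' ⟨lam', mu', h1', h2', h3', h4', h5', rfl⟩
    s t hs ht hst
  refine ⟨fun i => s * lam i + t * lam' i, fun j => s * mu j + t * mu' j,
    fun i => add_nonneg (mul_nonneg hs (h1 i)) (mul_nonneg ht (h1' i)),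
    fun i hi => by rw [show (fun i => s * lam i + t * lam' i) i = s * lam i + t * lam' i from rfl,
      h2 i hi, h2' i hi]; ring,
    ?_, fun j => add_nonneg (mul_nonneg hs (h4 j)) (mul_nonneg ht (h4' j)),
    fun j hj => by rw [show (fun j => s * mu j + t * mu' j) j = s * mu j + t * mu' j from rfl,
      h5 j hj, h5' j hj]; ring, ?_⟩
  · rw [Finset.sum_add_distrib, ← Finset.mul_sum, ← Finset.mul_sum, h3, h3']
    simpa using hst
  · rw [sum_comb, sum_comb]
    module

/-- Membership in `convCone` with the cone part given by a `coneGen`. -/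
lemma isClosed_convCone (K : Finset (Fin θ.l)) (I : Finset (Fin θ.p)) :
    IsClosed (θ.convCone K I) := by
  classical
  set T : (Fin θ.l → ℝ) → Ev m := fun lam => ∑ i, lam i • θ.a i with hT
  have hTc : Continuous T :=
    continuous_finset_sum _ (fun i _ => (continuous_apply i).smul continuous_const)
  set Δ : Set (Fin θ.l → ℝ) :=
    {lam | (∀ i, 0 ≤ lam i) ∧ (∀ i ∉ K, lam i = 0) ∧ ∑ i, lam i = 1} with hΔ
  have hΔcompact : IsCompact Δ := by
    rw [Metric.isCompact_iff_isClosed_bounded]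
    constructor
    · have : Δ = (⋂ i, {lam : Fin θ.l → ℝ | 0 ≤ lam i}) ∩
          ((⋂ i, {lam : Fin θ.l → ℝ | i ∉ K → lam i = 0}) ∩
           {lam : Fin θ.l → ℝ | ∑ i, lam i = 1}) := by
        ext lam
        simp only [hΔ, Set.mem_setOf_eq, Set.mem_inter_iff, Set.mem_iInter]
        try tauto
      rw [this]
      refine IsClosed.inter (isClosed_iInter fun i =>
          isClosed_le continuous_const (continuous_apply i)) (IsClosed.inter ?_ ?_)
      · refine isClosed_iInter fun i => ?_
        by_cases hi : i ∈ K
        · simp only [hi, not_true_eq_false, false_implies]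
          exact isClosed_univ
        · simp only [hi, not_false_eq_true, true_implies]
          exact isClosed_eq (continuous_apply i) continuous_const
      · exact isClosed_eq (continuous_finset_sum _ fun i _ => continuous_apply i)
          continuous_const
    · refine Bornology.IsBounded.subset (Metric.isBounded_closedBall (x := (0 : Fin θ.l → ℝ)) (r := 1)) ?_
      rintro lam ⟨hl0, hlK, hls⟩
      rw [Metric.mem_closedBall, dist_zero_right]
      rw [pi_norm_le_iff_of_nonneg zero_le_one]
      intro i
      rw [Real.norm_eq_abs, abs_of_nonneg (hl0 i)]
      calc lam i ≤ ∑ i', lam i' := Finset.single_le_sum (fun i' _ => hl0 i') (Finset.mem_univ i)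
        _ = 1 := hls
  set Cone : Set (Ev m) := coneGen (fun j => if j ∈ I then θ.d j else 0) with hCone
  have hConeClosed : IsClosed Cone := isClosed_coneGen _
  have hConeMem : ∀ mu : Fin θ.p → ℝ, (∀ j, 0 ≤ mu j) → (∀ j ∉ I, mu j = 0) →
      (∑ j, mu j • θ.d j) ∈ Cone := by
    intro mu h0 hs
    refine ⟨mu, h0, Finset.sum_congr rfl fun j _ => ?_⟩
    by_cases hj : j ∈ I
    · simp [hj]
    · rw [hs j hj, zero_smul, zero_smul]
  have hConeRep : ∀ y ∈ Cone, ∃ mu : Fin θ.p → ℝ, (∀ j, 0 ≤ mu j) ∧ (∀ j ∉ I, mu j = 0) ∧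
      y = ∑ j, mu j • θ.d j := by
    rintro y ⟨mu, h0, rfl⟩
    refine ⟨fun j => if j ∈ I then mu j else 0,
      fun j => by dsimp only; split; exacts [h0 j, le_rfl],
      fun j hj => by simp [hj], Finset.sum_congr rfl fun j _ => ?_⟩
    by_cases hj : j ∈ I
    · simp [hj]
    · simp [hj]
  -- sequential closedness
  refine IsSeqClosed.isClosed ?_
  intro u q hu huq
  have hrep : ∀ n, ∃ lam ∈ Δ, u n - T lam ∈ Cone := by
    intro n
    obtain ⟨lam, mu, h1, h2, h3, h4, h5, heq⟩ := hu n
    refine ⟨lam, ⟨h1, h2, h3⟩, ?_⟩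
    rw [heq]
    have : ∑ i, lam i • θ.a i + ∑ j, mu j • θ.d j - T lam = ∑ j, mu j • θ.d j := by
      rw [hT]; abel
    rw [this]
    exact hConeMem mu h4 h5
  choose lam hlamΔ hcone using hrep
  obtain ⟨lam₀, hlam₀, φ, hφmono, hφ⟩ := hΔcompact.tendsto_subseq hlamΔ
  have hTlim : Tendsto (fun n => T (lam (φ n))) atTop (𝓝 (T lam₀)) :=
    (hTc.tendsto lam₀).comp hφ
  have hulim : Tendsto (fun n => u (φ n)) atTop (𝓝 q) := huq.comp hφmono.tendsto_atTop
  have hydiff : Tendsto (fun n => u (φ n) - T (lam (φ n))) atTop (𝓝 (q - T lam₀)) :=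
    hulim.sub hTlim
  have hyC : q - T lam₀ ∈ Cone :=
    hConeClosed.isSeqClosed (fun n => hcone (φ n)) hydiff
  obtain ⟨mu, hm0, hmI, hmeq⟩ := hConeRep _ hyC
  exact ⟨lam₀, mu, hlam₀.1, hlam₀.2.1, hlam₀.2.2, hm0, hmI, by rw [← hmeq, hT]; abel⟩

end CPWL
namespace CPWL

variable {m : ℕ} (θ : CPWL m)

lemma single_mem_convCone {K : Finset (Fin θ.l)} {I : Finset (Fin θ.p)}
    {i : Fin θ.l} (hi : i ∈ K) {j : Fin θ.p} (hj : j ∈ I) {μ : ℝ} (hμ : 0 ≤ μ) :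
    θ.a i + μ • θ.d j ∈ θ.convCone K I := by
  classical
  refine ⟨fun i' => if i' = i then 1 else 0, fun j' => if j' = j then μ else 0,
    fun i' => by dsimp only; split; exacts [zero_le_one, le_rfl],
    fun i' hi' => by dsimp only; rw [if_neg]; rintro rfl; exact hi' hi,
    by simp, fun j' => by dsimp only; split; exacts [hμ, le_rfl],
    fun j' hj' => by dsimp only; rw [if_neg]; rintro rfl; exact hj' hj, ?_⟩
  have h1 : (∑ i', (if i' = i then (1:ℝ) else 0) • θ.a i') = θ.a i := by
    rw [show (∑ i', (if i' = i then (1:ℝ) else 0) • θ.a i')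
        = ∑ i', (if i' = i then θ.a i' else 0) from
      Finset.sum_congr rfl fun i' _ => by split <;> simp]
    rw [Finset.sum_ite_eq' Finset.univ i θ.a, if_pos (Finset.mem_univ i)]
  have h2 : (∑ j', (if j' = j then μ else 0) • θ.d j') = μ • θ.d j := by
    rw [show (∑ j', (if j' = j then μ else 0) • θ.d j')
        = ∑ j', (if j' = j then μ • θ.d j' else 0) from
      Finset.sum_congr rfl fun j' _ => by split <;> simp]
    rw [Finset.sum_ite_eq' Finset.univ j (fun j' => μ • θ.d j'), if_pos (Finset.mem_univ j)]
  rw [h1, h2]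

lemma single_mem_convCone' {K : Finset (Fin θ.l)} {I : Finset (Fin θ.p)}
    {i : Fin θ.l} (hi : i ∈ K) : θ.a i ∈ θ.convCone K I := by
  classical
  refine ⟨fun i' => if i' = i then 1 else 0, fun _ => 0,
    fun i' => by dsimp only; split; exacts [zero_le_one, le_rfl],
    fun i' hi' => by dsimp only; rw [if_neg]; rintro rfl; exact hi' hi,
    by simp, fun _ => le_rfl, fun _ _ => rfl, ?_⟩
  have h1 : (∑ i', (if i' = i then (1:ℝ) else 0) • θ.a i') = θ.a i := by
    rw [show (∑ i', (if i' = i then (1:ℝ) else 0) • θ.a i')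
        = ∑ i', (if i' = i then θ.a i' else 0) from
      Finset.sum_congr rfl fun i' _ => by split <;> simp]
    rw [Finset.sum_ite_eq' Finset.univ i θ.a, if_pos (Finset.mem_univ i)]
  rw [h1]
  simp

/-- Hard inclusion: the subdifferential is contained in the active piece. -/
lemma subdiff_subset_convCone {z v : Ev m} (hv : v ∈ θ.subdiff z) :
    v ∈ θ.convCone (θ.KactF z) (θ.IactF z) := by
  haveI := θ.nel
  set K := θ.KactF z with hK
  set I := θ.IactF z with hI
  by_contra hvC
  obtain ⟨i₀, hi₀⟩ := θ.exists_active z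
  have hi₀K : i₀ ∈ K := θ.mem_KactF.2 hi₀
  have hKne : K.Nonempty := ⟨i₀, hi₀K⟩
  obtain ⟨f, u, hfv, hfC⟩ := geometric_hahn_banach_point_closed
    (θ.convex_convCone K I) (θ.isClosed_convCone K I) hvC
  -- the separating functional is nonnegative on the cone directions
  have hdj : ∀ j ∈ I, 0 ≤ f (θ.d j) := by
    intro j hj
    by_contra hneg
    push_neg at hneg
    have hA : u < f (θ.a i₀) := hfC _ (θ.single_mem_convCone' hi₀K)
    set μ : ℝ := (f (θ.a i₀) - u) / (-(f (θ.d j))) with hμdef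
    have hμ : 0 ≤ μ := div_nonneg (by linarith) (by linarith)
    have := hfC _ (θ.single_mem_convCone hi₀K hj hμ)
    rw [map_add, map_smul, smul_eq_mul] at this
    have hBne : f (θ.d j) ≠ 0 := ne_of_lt hneg
    have hmul : μ * f (θ.d j) = -(f (θ.a i₀) - u) := by
      rw [hμdef, div_neg, neg_mul, div_mul_cancel₀ _ hBne]
    linarith
  -- pass to an inner-product representation
  set g : Ev m := (InnerProductSpace.toDual ℝ (Ev m)).symm f with hg
  have hgy : ∀ y : Ev m, ⟪g, y⟫ = f y := fun y => InnerProductSpace.toDual_symm_apply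
  set h : Ev m := -g with hh
  have hhy : ∀ y : Ev m, ⟪y, h⟫ = -(f y) := by
    intro y
    rw [real_inner_comm, hh, inner_neg_left, hgy]
  have heq : ∀ (y : Ev m) (t : ℝ), ⟪y, z + t • h⟫ = ⟪y, z⟫ + t * ⟪y, h⟫ := by
    intro y t
    rw [inner_add_right, real_inner_smul_right]
  set M : ℝ := K.sup' hKne (fun i => ⟪θ.a i, h⟫) with hM
  have hMu : M ≤ -u := by
    refine Finset.sup'_le _ _ fun i hi => ?_
    rw [hhy]
    have := hfC _ (θ.single_mem_convCone' hi)
    linarith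
  have hvh : -u < ⟪v, h⟫ := by rw [hhy]; linarith
  -- choose a small positive stepsize
  have hdomE : ∀ j : Fin θ.p, ∀ᶠ t in 𝓝[>] (0:ℝ), ⟪θ.d j, z + t • h⟫ ≤ θ.be j := by
    intro j
    by_cases hj : j ∈ I
    · have hdh : ⟪θ.d j, h⟫ ≤ 0 := by
        rw [hhy]
        linarith [hdj j hj]
      filter_upwards [self_mem_nhdsWithin] with t ht
      rw [heq, θ.mem_IactF.1 hj]
      have ht' : (0:ℝ) < t := ht
      nlinarith
    · have hstrict : ⟪θ.d j, z⟫ < θ.be j :=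
        lt_of_le_of_ne (hv.1 j) (fun hcon => hj (θ.mem_IactF.2 hcon))
    
      have hcont : Tendsto (fun t : ℝ => ⟪θ.d j, z⟫ + t * ⟪θ.d j, h⟫) (𝓝[>] (0:ℝ))
          (𝓝 (⟪θ.d j, z⟫ + 0 * ⟪θ.d j, h⟫)) := by
        refine Filter.Tendsto.mono_left ?_ nhdsWithin_le_nhds
        exact (Continuous.tendsto (continuous_const.add (continuous_id.mul continuous_const)) 0)
      rw [zero_mul, add_zero] at hcont
      filter_upwards [hcont.eventually_lt_const hstrict] with t ht
      rw [heq]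
      exact ht.le
  have hvalE : ∀ i : Fin θ.l, ∀ᶠ t in 𝓝[>] (0:ℝ),
      i ∉ K → ⟪θ.a i, z + t • h⟫ - θ.al i ≤ θ.val z + t * M := by
    intro i
    by_cases hi : i ∈ K
    · exact Filter.Eventually.of_forall fun t hcon => absurd hi hcon
    · have hstrict : ⟪θ.a i, z⟫ - θ.al i < θ.val z := by
        refine lt_of_le_of_ne (θ.term_le_val z i) (fun hcon => hi (θ.mem_KactF.2 hcon.symm))
      have hcont : Tendsto (fun t : ℝ => (⟪θ.a i, z⟫ - θ.al i) + t * (⟪θ.a i, h⟫ - M))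
          (𝓝[>] (0:ℝ)) (𝓝 ((⟪θ.a i, z⟫ - θ.al i) + 0 * (⟪θ.a i, h⟫ - M))) := by
        refine Filter.Tendsto.mono_left ?_ nhdsWithin_le_nhds
        exact (Continuous.tendsto (continuous_const.add (continuous_id.mul continuous_const)) 0)
      rw [zero_mul, add_zero] at hcont
      filter_upwards [hcont.eventually_lt_const hstrict] with t ht _
      rw [heq]
      nlinarith [ht]
  have hall : ∀ᶠ t in 𝓝[>] (0:ℝ), (∀ j : Fin θ.p, ⟪θ.d j, z + t • h⟫ ≤ θ.be j) ∧
      (∀ i : Fin θ.l, i ∉ K → ⟪θ.a i, z + t • h⟫ - θ.al i ≤ θ.val z + t * M) :=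
    (eventually_all.2 hdomE).and (eventually_all.2 hvalE)
  obtain ⟨t, ⟨hdomt, hvalt⟩, ht⟩ := (hall.and self_mem_nhdsWithin).exists
  have ht0 : (0:ℝ) < t := ht
  -- the value estimate
  have hvub : θ.val (z + t • h) ≤ θ.val z + t * M := by
    refine ciSup_le fun i => ?_
    by_cases hi : i ∈ K
    · rw [heq]
      have hzi : θ.val z = ⟪θ.a i, z⟫ - θ.al i := θ.mem_KactF.1 hi
      have hle : ⟪θ.a i, h⟫ ≤ M := by rw [hM]; exact Finset.le_sup' (fun i => (⟪θ.a i, h⟫ : ℝ)) hi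
      nlinarith
    · exact hvalt i hi
  -- subgradient inequality at z + t h
  have hsub := hv.2 (z + t • h) hdomt
  rw [add_sub_cancel_left, real_inner_smul_right] at hsub
  have : t * ⟪v, h⟫ ≤ t * M := by linarith
  have hvM : ⟪v, h⟫ ≤ M := le_of_mul_le_mul_left (by linarith [this]) ht0
  linarith

end CPWL
namespace CPWL

variable {m : ℕ} (θ : CPWL m)

open Classical in
/-- Generators of the tangent directions in the `v`-component. -/
def gKI (K : Finset (Fin θ.l)) (I : Finset (Fin θ.p)) (vb : Ev m) : Fin θ.l ⊕ Fin θ.p → Ev m :=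
  Sum.elim (fun i => if i ∈ K then θ.a i - vb else 0) (fun j => if j ∈ I then θ.d j else 0)

lemma sub_mem_coneGen {K : Finset (Fin θ.l)} {I : Finset (Fin θ.p)} {vb v : Ev m}
    (hv : v ∈ θ.convCone K I) {c : ℝ} (hc : 0 ≤ c) :
    c • (v - vb) ∈ coneGen (θ.gKI K I vb) := by
  obtain ⟨lam, mu, h1, h2, h3, h4, h5, rfl⟩ := hv
  refine ⟨Sum.elim (fun i => c * lam i) (fun j => c * mu j), ?_, ?_⟩
  · rintro (i | j)
    · exact mul_nonneg hc (h1 i)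
    · exact mul_nonneg hc (h4 j)
  · rw [Fintype.sum_sum_type]
    have e1 : ∑ i, (Sum.elim (fun i => c * lam i) (fun j => c * mu j) (Sum.inl i))
        • θ.gKI K I vb (Sum.inl i) = c • ((∑ i, lam i • θ.a i) - vb) := by
      have step1 : ∀ i, (Sum.elim (fun i => c * lam i) (fun j => c * mu j) (Sum.inl i))
          • θ.gKI K I vb (Sum.inl i) = c • (lam i • θ.a i - lam i • vb) := by
        intro i
        simp only [Sum.elim_inl, gKI]
        by_cases hi : i ∈ K
        · rw [if_pos hi, mul_smul, smul_sub]
        · simp [h2 i hi]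
      rw [Finset.sum_congr rfl (fun i _ => step1 i), ← Finset.smul_sum,
        Finset.sum_sub_distrib, ← Finset.sum_smul, h3, one_smul]
    have e2 : ∑ j, (Sum.elim (fun i => c * lam i) (fun j => c * mu j) (Sum.inr j))
        • θ.gKI K I vb (Sum.inr j) = c • (∑ j, mu j • θ.d j) := by
      have step2 : ∀ j, (Sum.elim (fun i => c * lam i) (fun j => c * mu j) (Sum.inr j))
          • θ.gKI K I vb (Sum.inr j) = c • (mu j • θ.d j) := by
        intro j
        simp only [Sum.elim_inr, gKI]
        by_cases hj : j ∈ I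
        · rw [if_pos hj, mul_smul]
        · simp [h5 j hj]
      rw [Finset.sum_congr rfl (fun j _ => step2 j), ← Finset.smul_sum]
    rw [e1, e2, ← smul_add]
    congr 1
    abel

lemma coneGen_rep {K : Finset (Fin θ.l)} {I : Finset (Fin θ.p)} {vb w : Ev m}
    (hw : w ∈ coneGen (θ.gKI K I vb)) :
    ∃ ν : Fin θ.l → ℝ, ∃ ρ : Fin θ.p → ℝ, (∀ i, 0 ≤ ν i) ∧ (∀ i ∉ K, ν i = 0) ∧
      (∀ j, 0 ≤ ρ j) ∧ (∀ j ∉ I, ρ j = 0) ∧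
      w = (∑ i, ν i • θ.a i) - (∑ i, ν i) • vb + ∑ j, ρ j • θ.d j := by
  classical
  obtain ⟨μ, hμ0, rfl⟩ := hw
  set ν : Fin θ.l → ℝ := fun i => if i ∈ K then μ (Sum.inl i) else 0 with hν
  set ρ : Fin θ.p → ℝ := fun j => if j ∈ I then μ (Sum.inr j) else 0 with hρ
  refine ⟨ν, ρ, fun i => by rw [hν]; dsimp only; split; exacts [hμ0 _, le_rfl],
    fun i hi => by rw [hν]; simp [hi],
    fun j => by rw [hρ]; dsimp only; split; exacts [hμ0 _, le_rfl],
    fun j hj => by rw [hρ]; simp [hj], ?_⟩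
  rw [Fintype.sum_sum_type]
  have e1 : ∀ i, μ (Sum.inl i) • θ.gKI K I vb (Sum.inl i) = ν i • θ.a i - ν i • vb := by
    intro i
    rw [hν]; dsimp only [gKI, Sum.elim_inl]
    by_cases hi : i ∈ K
    · rw [if_pos hi, if_pos hi, smul_sub]
    · rw [if_neg hi, if_neg hi, smul_zero, zero_smul, zero_smul, sub_self]
  have e2 : ∀ j, μ (Sum.inr j) • θ.gKI K I vb (Sum.inr j) = ρ j • θ.d j := by
    intro j
    rw [hρ]; dsimp only [gKI, Sum.elim_inr]
    by_cases hj : j ∈ I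
    · rw [if_pos hj, if_pos hj]
    · rw [if_neg hj, if_neg hj, smul_zero, zero_smul]
  rw [Finset.sum_congr rfl (fun i _ => e1 i), Finset.sum_congr rfl (fun j _ => e2 j),
    Finset.sum_sub_distrib, ← Finset.sum_smul]

/-- Moving from `vb` a short way along a tangent direction stays in the piece. -/
lemma convCone_add_smul {K : Finset (Fin θ.l)} {I : Finset (Fin θ.p)} {vb w : Ev m}
    (hvb : vb ∈ θ.convCone K I) (hw : w ∈ coneGen (θ.gKI K I vb)) :
    ∃ σ₀ > (0:ℝ), ∀ σ : ℝ, 0 ≤ σ → σ ≤ σ₀ → vb + σ • w ∈ θ.convCone K I := by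
  obtain ⟨ν, ρ, hν0, hνK, hρ0, hρI, hwrep⟩ := θ.coneGen_rep hw
  obtain ⟨lam, mu, h1, h2, h3, h4, h5, hvbeq⟩ := hvb
  set S : ℝ := ∑ i, ν i with hS
  have hS0 : 0 ≤ S := Finset.sum_nonneg fun i _ => hν0 i
  refine ⟨1 / (S + 1), by positivity, fun σ hσ0 hσ1 => ?_⟩
  have hσS : σ * (S + 1) ≤ 1 := by
    rw [← le_div_iff₀ (by positivity)]
    exact hσ1
  have h1σS : 0 ≤ 1 - σ * S := by nlinarith
  refine ⟨fun i => (1 - σ * S) * lam i + σ * ν i, fun j => (1 - σ * S) * mu j + σ * ρ j,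
    fun i => add_nonneg (mul_nonneg h1σS (h1 i)) (mul_nonneg hσ0 (hν0 i)),
    fun i hi => by
      rw [show (fun i => (1 - σ * S) * lam i + σ * ν i) i
          = (1 - σ * S) * lam i + σ * ν i from rfl, h2 i hi, hνK i hi]; ring,
    ?_,
    fun j => add_nonneg (mul_nonneg h1σS (h4 j)) (mul_nonneg hσ0 (hρ0 j)),
    fun j hj => by
      rw [show (fun j => (1 - σ * S) * mu j + σ * ρ j) j
          = (1 - σ * S) * mu j + σ * ρ j from rfl, h5 j hj, hρI j hj]; ring, ?_⟩
  · rw [Finset.sum_add_distrib, ← Finset.mul_sum, ← Finset.mul_sum, h3]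
    ring
  · rw [sum_comb, sum_comb, hwrep, hvbeq]
    module

end CPWL
section Analysis

variable {n m : ℕ}

lemma tendsto_diffquot {F : Type*} [NormedAddCommGroup F] [NormedSpace ℝ F]
    {g : Ev n → F} {G : Ev n →L[ℝ] F} {xb : Ev n} (hG : HasFDerivAt g G xb)
    {x : ℕ → Ev n} (hx : Tendsto x atTop (𝓝 xb)) (hxne : ∀ k, x k ≠ xb)
    {ξ₀ : Ev n} (hξ : Tendsto (fun k => ‖x k - xb‖⁻¹ • (x k - xb)) atTop (𝓝 ξ₀)) :
    Tendsto (fun k => ‖x k - xb‖⁻¹ • (g (x k) - g xb)) atTop (𝓝 (G ξ₀)) := by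
  have ht : ∀ k, (0:ℝ) < ‖x k - xb‖ := fun k => norm_pos_iff.2 (sub_ne_zero.2 (hxne k))
  have hlo : (fun k => g (x k) - g xb - G (x k - xb)) =o[atTop] (fun k => x k - xb) :=
    hG.isLittleO.comp_tendsto hx
  have h0 : Tendsto (fun k => ‖x k - xb‖⁻¹ • (g (x k) - g xb - G (x k - xb))) atTop (𝓝 0) := by
    rw [NormedAddCommGroup.tendsto_nhds_zero]
    intro ε hε
    filter_upwards [hlo.def (half_pos hε)] with k hk
    rw [norm_smul, norm_inv, norm_norm]
    calc ‖x k - xb‖⁻¹ * ‖g (x k) - g xb - G (x k - xb)‖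
        ≤ ‖x k - xb‖⁻¹ * (ε / 2 * ‖x k - xb‖) := by
          exact mul_le_mul_of_nonneg_left hk (by positivity)
      _ = ε / 2 := by
          rw [mul_comm (ε / 2), ← mul_assoc, inv_mul_cancel₀ (ht k).ne', one_mul]
      _ < ε := half_lt_self hε
  have h1 : Tendsto (fun k => G (‖x k - xb‖⁻¹ • (x k - xb))) atTop (𝓝 (G ξ₀)) :=
    (G.continuous.tendsto ξ₀).comp hξ
  have hid : ∀ k, ‖x k - xb‖⁻¹ • (g (x k) - g xb)
      = ‖x k - xb‖⁻¹ • (g (x k) - g xb - G (x k - xb)) + G (‖x k - xb‖⁻¹ • (x k - xb)) := by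
    intro k
    rw [map_smul, ← smul_add]
    congr 1
    abel
  rw [show (fun k => ‖x k - xb‖⁻¹ • (g (x k) - g xb)) = fun k =>
      ‖x k - xb‖⁻¹ • (g (x k) - g xb - G (x k - xb)) + G (‖x k - xb‖⁻¹ • (x k - xb)) from
    funext hid]
  simpa using h0.add h1

set_option maxHeartbeats 2000000 in
lemma core_crit (θ : CPWL m) (f : Ev n → Ev n) (Φ : Ev n → Ev m) (xb : Ev n) (vb : Ev m)
    (hf : ContDiffAt ℝ 1 f xb) (hPhi : ContDiffAt ℝ 2 Φ xb) (hvb : vb ∈ Lam f Φ θ xb)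
    (x : ℕ → Ev n) (v : ℕ → Ev m) (K : Finset (Fin θ.l)) (I : Finset (Fin θ.p)) (ξ₀ : Ev n)
    (hxne : ∀ k, x k ≠ xb)
    (hPsi : ∀ k, Psi f Φ (x k) (v k) = 0)
    (hsub : ∀ k, v k ∈ θ.subdiff (Φ (x k)))
    (hK : ∀ k, θ.KactF (Φ (x k)) = K) (hI : ∀ k, θ.IactF (Φ (x k)) = I)
    (hx : Tendsto x atTop (𝓝 xb)) (hv : Tendsto v atTop (𝓝 vb))
    (hξ : Tendsto (fun k => ‖x k - xb‖⁻¹ • (x k - xb)) atTop (𝓝 ξ₀))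
    (hξ0 : ξ₀ ≠ 0) : IsCritical f Φ θ xb vb := by
  classical
  set t : ℕ → ℝ := fun k => ‖x k - xb‖ with htdef
  have ht : ∀ k, (0:ℝ) < t k := fun k => norm_pos_iff.2 (sub_ne_zero.2 (hxne k))
  set z : ℕ → Ev m := fun k => Φ (x k) with hzdef
  set zb : Ev m := Φ xb with hzbdef
  have hzt : Tendsto z atTop (𝓝 zb) := (hPhi.continuousAt.tendsto).comp hx
  -- the pieces
  have hvC : ∀ k, v k ∈ θ.convCone K I := by
    intro k
    have := θ.subdiff_subset_convCone (hsub k)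
    rwa [hK k, hI k] at this
  have hvbC : vb ∈ θ.convCone K I :=
    (θ.isClosed_convCone K I).isSeqClosed hvC hv
  have hZk : ∀ k, θ.Zp K I (z k) := by
    intro k
    have := θ.Zp_self (z k) (hsub k).1
    rwa [hK k, hI k] at this
  have hZb : θ.Zp K I zb := θ.Zp_of_tendsto hZk hzt
  -- derivatives
  have hΦd : HasFDerivAt Φ (fderiv ℝ Φ xb) xb :=
    (hPhi.differentiableAt (by norm_num)).hasFDerivAt
  have hfdd : DifferentiableAt ℝ (fderiv ℝ Φ) xb :=
    (hPhi.fderiv_right (m := 1) (by norm_num)).differentiableAt one_ne_zero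
  -- the continuous linear map  L ↦ (adjoint L) vb
  set adjL : (Ev n →L[ℝ] Ev m) →ₗ[ℝ] Ev n :=
    { toFun := fun L => ContinuousLinearMap.adjoint L vb
      map_add' := fun L L' => by
        rw [map_add, ContinuousLinearMap.add_apply]
      map_smul' := fun r L => by
        have hsm : ContinuousLinearMap.adjoint (r • L) = r • ContinuousLinearMap.adjoint L := by
          rw [LinearIsometryEquiv.map_smulₛₗ, starRingEnd_apply, star_trivial]
        rw [hsm, ContinuousLinearMap.smul_apply]
        rfl } with hadjL
  set adjCLM : (Ev n →L[ℝ] Ev m) →L[ℝ] Ev n :=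
    adjL.mkContinuous ‖vb‖ (fun L => by
      calc ‖adjL L‖ = ‖ContinuousLinearMap.adjoint L vb‖ := rfl
        _ ≤ ‖ContinuousLinearMap.adjoint L‖ * ‖vb‖ := ContinuousLinearMap.le_opNorm _ _
        _ = ‖vb‖ * ‖L‖ := by rw [LinearIsometryEquiv.norm_map]; ring) with hadjCLM
  have hadjapp : ∀ (y : Ev n), adjD Φ y vb = adjCLM (fderiv ℝ Φ y) := fun y => rfl
  have gdiff : DifferentiableAt ℝ (fun y => Psi f Φ y vb) xb := by
    have h2 : DifferentiableAt ℝ (fun y => adjCLM (fderiv ℝ Φ y)) xb :=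
      (adjCLM.differentiableAt).comp xb hfdd
    have : (fun y => Psi f Φ y vb) = fun y => f y + adjCLM (fderiv ℝ Φ y) := by
      funext y
      rw [Psi, hadjapp]
    rw [this]
    exact (hf.differentiableAt one_ne_zero).add h2
  set G : Ev n →L[ℝ] Ev n := gradxPsi f Φ xb vb with hGdef
  have hG : HasFDerivAt (fun y => Psi f Φ y vb) G xb := gdiff.hasFDerivAt
  -- Lipschitz bound for the adjoint Jacobian
  obtain ⟨Lc, tset, htset, hLip⟩ := (hPhi.fderiv_right (m := 1) (by norm_num)).exists_lipschitzOnWith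
  have hADlip : ∀ᶠ k in atTop, ‖adjD Φ (x k) - adjD Φ xb‖ ≤ Lc * t k := by
    filter_upwards [hx.eventually_mem htset] with k hk
    have hxbmem : xb ∈ tset := mem_of_mem_nhds htset
    have hdist := hLip.dist_le_mul (x := x k) (y := xb) hk hxbmem
    rw [dist_eq_norm, dist_eq_norm] at hdist
    have heqn : ‖adjD Φ (x k) - adjD Φ xb‖ = ‖fderiv ℝ Φ (x k) - fderiv ℝ Φ xb‖ := by
      rw [adjD, adjD, ← map_sub, LinearIsometryEquiv.norm_map]
    rw [heqn]
    exact hdist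
  set A : Ev m →L[ℝ] Ev n := adjD Φ xb with hAdef
  set w : ℕ → Ev m := fun k => (t k)⁻¹ • (v k - vb) with hwdef
  have hwk : ∀ k, w k ∈ coneGen (θ.gKI K I vb) :=
    fun k => θ.sub_mem_coneGen (hvC k) (inv_nonneg.2 (norm_nonneg _))
  -- main limit:  A (w k) → -(G ξ₀)
  have hgq : Tendsto (fun k => (t k)⁻¹ • ((fun y => Psi f Φ y vb) (x k)
      - (fun y => Psi f Φ y vb) xb)) atTop (𝓝 (G ξ₀)) :=
    tendsto_diffquot hG hx hxne hξ
  have hgxb : Psi f Φ xb vb = 0 := hvb.1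
  have hkey : ∀ k, adjD Φ (x k) (v k - vb) = -(Psi f Φ (x k) vb) := by
    intro k
    have h0 : f (x k) + adjD Φ (x k) (v k) = 0 := hPsi k
    show adjD Φ (x k) (v k - vb) = -(f (x k) + adjD Φ (x k) vb)
    rw [map_sub]
    have h1 : adjD Φ (x k) (v k) = -(f (x k)) := by
      rwa [add_comm, add_eq_zero_iff_eq_neg] at h0
    rw [h1]
    abel
  have hid : ∀ k, A (w k) = -((t k)⁻¹ • (Psi f Φ (x k) vb - Psi f Φ xb vb))
      + (A - adjD Φ (x k)) (w k) := by
    intro k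
    rw [hgxb, sub_zero]
    have e1 : adjD Φ (x k) (w k) = (t k)⁻¹ • (-(Psi f Φ (x k) vb)) := by
      rw [hwdef]
      dsimp only
      rw [map_smul, hkey k]
    rw [ContinuousLinearMap.sub_apply, e1]
    module
  have hsecond : Tendsto (fun k => (A - adjD Φ (x k)) (w k)) atTop (𝓝 0) := by
    refine squeeze_zero_norm' (a := fun k => (Lc : ℝ) * ‖v k - vb‖) ?_ ?_
    · filter_upwards [hADlip] with k hk
      have hwnorm : ‖w k‖ = (t k)⁻¹ * ‖v k - vb‖ := by
        rw [hwdef]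
        dsimp only
        rw [norm_smul, Real.norm_eq_abs, abs_of_pos (inv_pos.2 (ht k))]
      calc ‖(A - adjD Φ (x k)) (w k)‖ ≤ ‖A - adjD Φ (x k)‖ * ‖w k‖ :=
            ContinuousLinearMap.le_opNorm _ _
        _ ≤ (Lc * t k) * ((t k)⁻¹ * ‖v k - vb‖) := by
            refine mul_le_mul ?_ ?_ (norm_nonneg _) (by positivity)
            · rw [← norm_neg, neg_sub]; exact hk
            · rw [hwnorm]
        _ = (Lc : ℝ) * (t k * (t k)⁻¹) * ‖v k - vb‖ := by ring
        _ = Lc * ‖v k - vb‖ := by rw [mul_inv_cancel₀ (ht k).ne', mul_one]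
    · have : Tendsto (fun k => v k - vb) atTop (𝓝 0) := tendsto_sub_nhds_zero_iff.2 hv
      simpa using (this.norm.const_mul (Lc : ℝ))
  have hAw : Tendsto (fun k => A (w k)) atTop (𝓝 (-(G ξ₀))) := by
    have := (hgq.neg).add hsecond
    rw [add_zero] at this
    exact this.congr (fun k => (hid k).symm)
  -- pass to the limit in the image cone
  have himg : ∀ k, A (w k) ∈ coneGen (fun s => A (θ.gKI K I vb s)) :=
    fun k => image_coneGen A _ (hwk k)
  have hlimmem : -(G ξ₀) ∈ coneGen (fun s => A (θ.gKI K I vb s)) :=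
    (isClosed_coneGen _).isSeqClosed himg hAw
  obtain ⟨winf, hwinfcone, hwinfeq⟩ := coneGen_elem_surj A _ hlimmem
  -- tangency
  set u : ℕ → Ev m := fun k => (t k)⁻¹ • (z k - zb) with hudef
  have hu : Tendsto u atTop (𝓝 (fderiv ℝ Φ xb ξ₀)) := tendsto_diffquot hΦd hx hxne hξ
  obtain ⟨σ₀, hσ₀, hσprop⟩ := θ.convCone_add_smul hvbC hwinfcone
  have htan : ∀ k, ((u k, winf) : Ev m × Ev m) ∈ tcone θ.gph (zb, vb) := by
    intro k
    have hτ : (0:ℝ) < min (t k) σ₀ := lt_min (ht k) hσ₀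
    refine mem_tcone_of_segment hτ ?_
    intro r
    set σ : ℝ := min (t k) σ₀ / (r + 1) with hσdef
    have hσpos : 0 < σ := by positivity
    have hσle : σ ≤ min (t k) σ₀ := by
      rw [hσdef]
      apply div_le_self (le_of_lt hτ)
      push_cast
      linarith [Nat.cast_nonneg (α := ℝ) r]
    have hpoint : ((zb, vb) : Ev m × Ev m) + σ • ((u k, winf)) = (zb + σ • u k, vb + σ • winf) := by
      rfl
    rw [hpoint]
    show vb + σ • winf ∈ θ.subdiff (zb + σ • u k)
    have hZpt : θ.Zp K I (zb + σ • u k) := by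
      have : zb + σ • u k = zb + (σ / t k) • (z k - zb) := by
        rw [hudef]
        simp only [smul_smul]
        rw [div_eq_mul_inv]
      rw [this]
      refine θ.Zp_combo hZb (hZk k) (by positivity) ?_
      rw [div_le_one (ht k)]
      exact le_trans hσle (min_le_left _ _)
    refine θ.convCone_subset_subdiff hZpt ?_
    exact hσprop σ hσpos.le (le_trans hσle (min_le_right _ _))
  have hwDsub : winf ∈ θ.Dsub (Φ xb) vb (fderiv ℝ Φ xb ξ₀) := by
    show ((fderiv ℝ Φ xb ξ₀, winf) : Ev m × Ev m) ∈ tcone θ.gph (Φ xb, vb)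
    have hlim : Tendsto (fun k => ((u k, winf) : Ev m × Ev m)) atTop
        (𝓝 (fderiv ℝ Φ xb ξ₀, winf)) := hu.prodMk_nhds tendsto_const_nhds
    exact (isClosed_tcone _ _).isSeqClosed htan hlim
  exact ⟨ξ₀, hξ0, winf, hwDsub, by rw [← hGdef, ← hAdef, hwinfeq]; abel⟩

end Analysis
section Final

variable {n m : ℕ}

lemma crit_of_seq (θ : CPWL m) (f : Ev n → Ev n) (Φ : Ev n → Ev m) (xb : Ev n) (vb : Ev m)
    (hf : ContDiffAt ℝ 1 f xb) (hPhi : ContDiffAt ℝ 2 Φ xb) (hvb : vb ∈ Lam f Φ θ xb)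
    (x : ℕ → Ev n) (v : ℕ → Ev m)
    (hxne : ∀ k, x k ≠ xb) (hPsi : ∀ k, Psi f Φ (x k) (v k) = 0)
    (hsub : ∀ k, v k ∈ θ.subdiff (Φ (x k)))
    (hx : Tendsto x atTop (𝓝 xb)) (hv : Tendsto v atTop (𝓝 vb)) :
    IsCritical f Φ θ xb vb := by
  have ht : ∀ k, (0:ℝ) < ‖x k - xb‖ := fun k => norm_pos_iff.2 (sub_ne_zero.2 (hxne k))
  set ξ : ℕ → Ev n := fun k => ‖x k - xb‖⁻¹ • (x k - xb) with hξdef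
  have hs : ∀ k, ξ k ∈ Metric.sphere (0 : Ev n) 1 := by
    intro k
    rw [mem_sphere_zero_iff_norm, hξdef]
    dsimp only
    rw [norm_smul, Real.norm_eq_abs, abs_of_pos (inv_pos.2 (ht k)),
      inv_mul_cancel₀ (ht k).ne']
  obtain ⟨ξ₀, hξ₀mem, φ1, hφ1, hφ1t⟩ := (isCompact_sphere (0:Ev n) 1).tendsto_subseq hs
  have hξ0ne : ξ₀ ≠ 0 := by
    have h1 : ‖ξ₀‖ = 1 := mem_sphere_zero_iff_norm.1 hξ₀mem
    intro h
    rw [h, norm_zero] at h1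
    norm_num at h1
  obtain ⟨c, hc⟩ := exists_frequently_eq
    (fun k => ((θ.KactF (Φ (x (φ1 k))), θ.IactF (Φ (x (φ1 k))))
      : Finset (Fin θ.l) × Finset (Fin θ.p)))
  obtain ⟨φ2, hφ2, hφ2eq⟩ := extraction_of_frequently_atTop hc
  have hψ : StrictMono (φ1 ∘ φ2) := hφ1.comp hφ2
  refine core_crit θ f Φ xb vb hf hPhi hvb (x ∘ (φ1 ∘ φ2)) (v ∘ (φ1 ∘ φ2)) c.1 c.2 ξ₀
    (fun k => hxne _) (fun k => hPsi _) (fun k => hsub _)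
    (fun k => congrArg Prod.fst (hφ2eq k)) (fun k => congrArg Prod.snd (hφ2eq k))
    (hx.comp hψ.tendsto_atTop) (hv.comp hψ.tendsto_atTop)
    ?_ hξ0ne
  exact hφ1t.comp hφ2.tendsto_atTop

lemma loc_uniq (θ : CPWL m) (f : Ev n → Ev n) (Φ : Ev n → Ev m) (xb : Ev n) (vb : Ev m)
    (hf : ContDiffAt ℝ 1 f xb) (hPhi : ContDiffAt ℝ 2 Φ xb) (hvb : vb ∈ Lam f Φ θ xb)
    (hnc : ¬ IsCritical f Φ θ xb vb) :
    ∃ ε > (0:ℝ), ∀ x' v', ‖x' - xb‖ < ε → ‖v' - vb‖ < ε → Psi f Φ x' v' = 0 →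
      v' ∈ θ.subdiff (Φ x') → x' = xb := by
  by_contra hcon
  push_neg at hcon
  have hseq : ∀ k : ℕ, ∃ xv : Ev n × Ev m, ‖xv.1 - xb‖ < 1/(k+1) ∧ ‖xv.2 - vb‖ < 1/(k+1) ∧
      Psi f Φ xv.1 xv.2 = 0 ∧ xv.2 ∈ θ.subdiff (Φ xv.1) ∧ xv.1 ≠ xb := by
    intro k
    obtain ⟨x', v', h1, h2, h3, h4, h5⟩ := hcon (1/(k+1)) (by positivity)
    exact ⟨(x', v'), h1, h2, h3, h4, h5⟩
  choose xv h1 h2 h3 h4 h5 using hseq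
  apply hnc
  refine crit_of_seq θ f Φ xb vb hf hPhi hvb (fun k => (xv k).1) (fun k => (xv k).2)
    h5 h3 h4 ?_ ?_
  · rw [← tendsto_sub_nhds_zero_iff]
    exact squeeze_zero_norm (fun k => (h1 k).le) tendsto_one_div_add_atTop_nhds_zero_nat
  · rw [← tendsto_sub_nhds_zero_iff]
    exact squeeze_zero_norm (fun k => (h2 k).le) tendsto_one_div_add_atTop_nhds_zero_nat

end Final

/-- if the multiplier is noncritical then, locally, the unperturbed solution
set coincides with `{x̄} × Λ(x̄)`. -/
theorem stmt13 {n m : ℕ} (θ : CPWL m) (f : Ev n → Ev n) (Φ : Ev n → Ev m)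
    (xb : Ev n) (vb : Ev m)
    (hf : ContDiffAt ℝ 1 f xb) (hPhi : ContDiffAt ℝ 2 Φ xb)
    (hvb : vb ∈ Lam f Φ θ xb)
    (hnc : ¬ IsCritical f Φ θ xb vb) :
    ∃ V ∈ 𝓝 ((xb, vb) : Ev n × Ev m),
      Smap f Φ θ 0 0 ∩ V = ({xb} ×ˢ Lam f Φ θ xb) ∩ V := by
  obtain ⟨ε, hε, huniq⟩ := loc_uniq θ f Φ xb vb hf hPhi hvb hnc
  refine ⟨Metric.ball xb ε ×ˢ Metric.ball vb ε,
    prod_mem_nhds (Metric.ball_mem_nhds _ hε) (Metric.ball_mem_nhds _ hε), ?_⟩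
  ext ⟨x', v'⟩
  constructor
  · rintro ⟨⟨hP, hS⟩, hV⟩
    have hV1 : x' ∈ Metric.ball xb ε := hV.1
    have hV2 : v' ∈ Metric.ball vb ε := hV.2
    rw [Metric.mem_ball, dist_eq_norm] at hV1 hV2
    rw [add_zero] at hS
    have hx' : x' = xb := huniq x' v' hV1 hV2 hP hS
    subst hx'
    exact ⟨⟨rfl, hP, hS⟩, hV⟩
  · rintro ⟨⟨hx1, hL⟩, hV⟩
    have hx1' : x' = xb := hx1
    subst hx1'
    refine ⟨⟨hL.1, ?_⟩, hV⟩
    rw [add_zero]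
    exact hL.2
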